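/- Let S be a nonempty compact set and N, D continuous with D > 0 on S, and let F(α) = max_{x∈S} [N(x) − α·D(x)]. Then F(α*) = 0 if and only if α* = max_{x∈S} N(x)/D(x). -/

import Mathlib

/-- On a nonempty compact set, a continuous-on function attains its supremum over the image. -/
lemma sSup_image_eq_max {α : Type*} [TopologicalSpace α] {S : Set α} (hS : S.Nonempty)
    (hSc : IsCompact S) {f : α → ℝ} (hf : ContinuousOn f S) :
    ∃ x0 ∈ S, (∀ x ∈ S, f x ≤ f x0) ∧ sSup (f '' S) = f x0 := by
  obtain ⟨x0, hx0S, hmax⟩ := hSc.exists_isMaxOn hS hf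
  refine ⟨x0, hx0S, fun x hx => hmax hx, le_antisymm ?_ ?_⟩
  · exact csSup_le (hS.image f) (by rintro _ ⟨x, hx, rfl⟩; exact hmax hx)
  · exact le_csSup (hSc.image_of_continuousOn hf).bddAbove ⟨x0, hx0S, rfl⟩

/-- Dinkelbach's theorem: `F(α*) = 0` iff `α*` equals the optimal value of the fractional
program `max_{x∈S} N x / D x`. -/
theorem dinkelbach_zero_iff (n : ℕ) (S : Set (Fin n → ℝ)) (hS : S.Nonempty)
    (hSc : IsCompact S) (N D : (Fin n → ℝ) → ℝ) (hN : Continuous N) (hD : Continuous D)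
    (hDpos : ∀ x ∈ S, 0 < D x) (αstar : ℝ) :
    sSup ((fun x => N x - αstar * D x) '' S) = 0 ↔
      αstar = sSup ((fun x => N x / D x) '' S) := by
  have hg : ContinuousOn (fun x => N x - αstar * D x) S :=
    (hN.sub (continuous_const.mul hD)).continuousOn
  have hf : ContinuousOn (fun x => N x / D x) S :=
    hN.continuousOn.div hD.continuousOn (fun x hx => (hDpos x hx).ne')
  obtain ⟨x0, hx0S, hx0max, hx0sup⟩ := sSup_image_eq_max hS hSc hg
  obtain ⟨x1, hx1S, hx1max, hx1sup⟩ := sSup_image_eq_max hS hSc hf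
  constructor
  · intro h0
    rw [hx0sup] at h0
    have hfx0 : N x0 / D x0 = αstar := by
      field_simp [(hDpos x0 hx0S).ne']
      linarith
    rw [hx1sup]
    have h1 : N x1 / D x1 ≤ αstar := by
      have := hx0max x1 hx1S
      rw [div_le_iff₀ (hDpos x1 hx1S)]
      linarith
    have h2 : αstar ≤ N x1 / D x1 := hfx0 ▸ hx1max x0 hx0S
    linarith
  · intro hα
    rw [hx1sup] at hα
    rw [hx0sup]
    have hgx1 : N x1 - αstar * D x1 = 0 := by
      have : N x1 = αstar * D x1 := by
        rw [hα, div_mul_cancel₀ _ (hDpos x1 hx1S).ne']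
      linarith
    have h1 : N x0 - αstar * D x0 ≤ 0 := by
      have := hx1max x0 hx0S
      rw [← hα, div_le_iff₀ (hDpos x0 hx0S)] at this
      linarith
    have h2 : 0 ≤ N x0 - αstar * D x0 := by
      have := hx0max x1 hx1S; linarith
    linarith
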